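/- Let i, k, r, s be positive integers and n ≥ 0 an integer. If i = 1, then F^1_{r,s}(k, n+k) = r^{n+k+1} + ∑_{j=-1}^{n} r^{n-j}·s·F^1_{r,s}(k, j). If i ≥ 2, then F^i_{r,s}(k, ni+k) = u(k,i) + ∑_{j=0}^{n} r^{n-j}·s·F^i_{r,s}(k, ij), where u(k,i) = r^{⌊(ni+k+1)/i⌋} if k ≥ i, u(k,i) = r^{n+1} if i = k+1, and u(k,i) = 0 if i ≥ k+2. -/

import Mathlib

/-- Auxiliary sequence: `genFibAux i k r s m` equals `F^i_{r,s}(k, m-1)`, i.e. the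
four-parameters sequence indexed by `m = n + 1 ≥ 0`.  For `i ≤ k` the initial values
(`-1 ≤ n ≤ k-2`, i.e. `m < k`) are `r^⌊(n+1)/i⌋`, for `k < i` (`m < i`) they are
`s^⌊(n+1)/k⌋`, and for `n ≥ max{k,i} - 1` the recurrence
`F(n) = r·F(n-i) + s·F(n-k)` holds. -/
def genFibAux (i k r s : ℕ) : ℕ → ℤ
  | m =>
    if m < max (max k i) 1 then
      if i ≤ k then (r : ℤ) ^ (m / i) else (s : ℤ) ^ (m / k)
    else
      r * genFibAux i k r s (m - max i 1) + s * genFibAux i k r s (m - max k 1)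
  termination_by m => m
  decreasing_by all_goals omega

/-- The four-parameters sequence `F^i_{r,s}(k,n)` for integer `n ≥ -1`, with the
convention that it vanishes for `n ≤ -2`. -/
def genFib (i k r s : ℕ) (n : ℤ) : ℤ :=
  if n < -1 then 0 else genFibAux i k r s (n + 1).toNat

private lemma genFibAux_rec (i k r s : ℕ) (hi : 0 < i) (hk : 0 < k) (m : ℕ)
    (h : max k i ≤ m) :
    genFibAux i k r s m = r * genFibAux i k r s (m - i) + s * genFibAux i k r s (m - k) := by
  rw [genFibAux, if_neg (by omega), Nat.max_eq_left hi, Nat.max_eq_left hk]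

private lemma genFibAux_init (i k r s : ℕ) (m : ℕ) (h : m < max (max k i) 1) :
    genFibAux i k r s m = if i ≤ k then (r : ℤ) ^ (m / i) else (s : ℤ) ^ (m / k) := by
  rw [genFibAux, if_pos h]

private lemma genFib_claim_one (k r s : ℕ) (hk : 0 < k) (N : ℕ) :
    genFibAux 1 k r s (N + k) = (r : ℤ) ^ (N + k) +
      ∑ m ∈ Finset.range (N + 1), (r : ℤ) ^ (N - m) * s * genFibAux 1 k r s m := by
  induction N with
  | zero =>
    rw [genFibAux_rec 1 k r s one_pos hk (0 + k) (by omega)]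
    have h1 : genFibAux 1 k r s (0 + k - 1) = (r : ℤ) ^ (k - 1) := by
      rw [genFibAux_init 1 k r s _ (by omega), if_pos (by omega : 1 ≤ k)]
      simp [Nat.div_one]
    have h2 : (r : ℤ) * (r : ℤ) ^ (k - 1) = (r : ℤ) ^ (0 + k) := by
      rw [← pow_succ']; congr 1; omega
    rw [h1, show 0 + k - k = 0 from by omega, h2]
    simp
  | succ N ih =>
    rw [genFibAux_rec 1 k r s one_pos hk (N + 1 + k) (by omega),
      show N + 1 + k - 1 = N + k from by omega, show N + 1 + k - k = N + 1 from by omega,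
      ih, Finset.sum_range_succ _ (N + 1), mul_add, Finset.mul_sum]
    have h1 : (r : ℤ) * (r : ℤ) ^ (N + k) = (r : ℤ) ^ (N + 1 + k) := by
      rw [← pow_succ']; congr 1; omega
    have h2 : ∀ m ∈ Finset.range (N + 1),
        (r : ℤ) * ((r : ℤ) ^ (N - m) * s * genFibAux 1 k r s m)
          = (r : ℤ) ^ (N + 1 - m) * s * genFibAux 1 k r s m := by
      intro m hm
      have : m ≤ N := by simpa [Nat.lt_succ_iff] using hm
      rw [show N + 1 - m = (N - m) + 1 from by omega, pow_succ']; ring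
    rw [h1, Finset.sum_congr rfl h2]
    simp only [Nat.sub_self, pow_zero]
    ring

private lemma genFib_claim_two (i k r s : ℕ) (hi : 2 ≤ i) (hk : 0 < k) (n : ℕ) :
    genFibAux i k r s (n * i + k + 1) =
      (if i ≤ k then (r : ℤ) ^ ((n * i + k + 1) / i)
        else if i = k + 1 then (r : ℤ) ^ (n + 1) else 0) +
      ∑ j ∈ Finset.range (n + 1), (r : ℤ) ^ (n - j) * s * genFibAux i k r s (j * i + 1) := by
  induction n with
  | zero =>
    simp only [Nat.zero_mul, Nat.zero_add, Finset.sum_range_one, Nat.sub_zero, pow_zero, one_mul]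
    by_cases h1 : i ≤ k
    · rw [genFibAux_rec i k r s (by omega) hk (k + 1) (by omega),
        show k + 1 - k = 1 from by omega]
      have e1 : genFibAux i k r s (k + 1 - i) = (r : ℤ) ^ ((k + 1 - i) / i) := by
        rw [genFibAux_init i k r s _ (by omega), if_pos h1]
      have e2 : (r : ℤ) * (r : ℤ) ^ ((k + 1 - i) / i) = (r : ℤ) ^ ((k + 1) / i) := by
        rw [← pow_succ']
        congr 1
        conv_rhs => rw [show k + 1 = (k + 1 - i) + i from by omega]
        rw [Nat.add_div_right _ (by omega)]
      rw [e1, e2, if_pos h1]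
    · by_cases h2 : i = k + 1
      · rw [if_neg h1, if_pos h2,
          genFibAux_rec i k r s (by omega) hk (k + 1) (by omega),
          show k + 1 - i = 0 from by omega, show k + 1 - k = 1 from by omega]
        rw [genFibAux_init i k r s 0 (by omega), if_neg h1]
        simp
      · rw [if_neg h1, if_neg h2]
        have hik : k + 2 ≤ i := by omega
        rw [genFibAux_init i k r s _ (by omega), if_neg h1,
          genFibAux_init i k r s 1 (by omega), if_neg h1]
        rw [show (k + 1) / k = 1 / k + 1 from by
          rw [show k + 1 = 1 + k from by omega, Nat.add_div_right _ hk],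
          pow_succ]
        ring
  | succ n ih =>
    rw [genFibAux_rec i k r s (by omega) hk ((n + 1) * i + k + 1) (by
        have : (n + 1) * i = n * i + i := by ring
        omega),
      show (n + 1) * i + k + 1 - i = n * i + k + 1 from by
        have : (n + 1) * i = n * i + i := by ring
        omega,
      show (n + 1) * i + k + 1 - k = (n + 1) * i + 1 from by omega,
      ih, Finset.sum_range_succ _ (n + 1), mul_add, Finset.mul_sum]
    have hU : (r : ℤ) * (if i ≤ k then (r : ℤ) ^ ((n * i + k + 1) / i)
          else if i = k + 1 then (r : ℤ) ^ (n + 1) else 0)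
        = (if i ≤ k then (r : ℤ) ^ (((n + 1) * i + k + 1) / i)
          else if i = k + 1 then (r : ℤ) ^ (n + 1 + 1) else 0) := by
      split_ifs with h1 h2
      · rw [← pow_succ']
        congr 1
        rw [show (n + 1) * i + k + 1 = (n * i + k + 1) + i from by ring,
          Nat.add_div_right _ (by omega)]
      · rw [← pow_succ']
      · ring
    have h2 : ∀ j ∈ Finset.range (n + 1),
        (r : ℤ) * ((r : ℤ) ^ (n - j) * s * genFibAux i k r s (j * i + 1))
          = (r : ℤ) ^ (n + 1 - j) * s * genFibAux i k r s (j * i + 1) := by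
      intro j hj
      have : j ≤ n := by simpa [Nat.lt_succ_iff] using hj
      rw [show n + 1 - j = (n - j) + 1 from by omega, pow_succ']; ring
    rw [hU, Finset.sum_congr rfl h2]
    simp only [Nat.sub_self, pow_zero]
    ring

/-- For positive integers `i, k, r, s` and integer `n ≥ 0`:
if `i = 1` then `F^1_{r,s}(k, n+k) = r^{n+k+1} + ∑_{j=-1}^{n} r^{n-j}·s·F^1_{r,s}(k, j)`;
if `i ≥ 2` then `F^i_{r,s}(k, ni+k) = u(k,i) + ∑_{j=0}^{n} r^{n-j}·s·F^i_{r,s}(k, ij)`,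
where `u(k,i) = r^⌊(ni+k+1)/i⌋` if `k ≥ i`, `u(k,i) = r^{n+1}` if `i = k+1`, and
`u(k,i) = 0` if `i ≥ k+2`. -/
theorem genFib_sum_identity (i k r s : ℕ) (hi : 0 < i) (hk : 0 < k) (hr : 0 < r)
    (hs : 0 < s) (n : ℕ) :
    (i = 1 →
      genFib 1 k r s ((n : ℤ) + k) =
        (r : ℤ) ^ (n + k + 1) +
          ∑ j ∈ Finset.Icc (-1 : ℤ) (n : ℤ),
            (r : ℤ) ^ ((n : ℤ) - j).toNat * s * genFib 1 k r s j) ∧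
    (2 ≤ i →
      genFib i k r s ((n : ℤ) * i + k) =
        (if i ≤ k then (r : ℤ) ^ ((n * i + k + 1) / i)
          else if i = k + 1 then (r : ℤ) ^ (n + 1) else 0) +
          ∑ j ∈ Finset.range (n + 1),
            (r : ℤ) ^ (n - j) * s * genFib i k r s ((j : ℤ) * i)) := by
  constructor
  · intro _
    rw [genFib, if_neg (by omega), show ((n : ℤ) + k + 1).toNat = n + 1 + k from by omega]
    have hmap : Finset.Icc (-1 : ℤ) (n : ℤ) =
        Finset.map ⟨fun m : ℕ => (m : ℤ) - 1, show Function.Injective (fun m : ℕ => (m : ℤ) - 1) from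
          fun a b h => by simp only at h; omega⟩
          (Finset.range (n + 2)) := by
      ext j
      simp only [Finset.mem_Icc, Finset.mem_map, Finset.mem_range,
        Function.Embedding.coeFn_mk]
      constructor
      · intro h
        exact ⟨(j + 1).toNat, by omega, by omega⟩
      · rintro ⟨m, hm, rfl⟩
        omega
    rw [hmap, Finset.sum_map]
    simp only [Function.Embedding.coeFn_mk]
    have hterm : ∀ m ∈ Finset.range (n + 2),
        (r : ℤ) ^ ((n : ℤ) - ((m : ℤ) - 1)).toNat * s * genFib 1 k r s ((m : ℤ) - 1)
          = (r : ℤ) ^ (n + 1 - m) * s * genFibAux 1 k r s m := by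
      intro m hm
      have hm' : m < n + 2 := Finset.mem_range.mp hm
      rw [genFib, if_neg (by omega),
        show ((m : ℤ) - 1 + 1).toNat = m from by omega,
        show ((n : ℤ) - ((m : ℤ) - 1)).toNat = n + 1 - m from by omega]
    rw [Finset.sum_congr rfl hterm]
    have := genFib_claim_one k r s hk (n + 1)
    rw [show n + 1 + k = n + k + 1 from by omega] at this
    rw [show n + 1 + k = n + k + 1 from by omega]
    exact this
  · intro h2
    have h0 : (0 : ℤ) ≤ (n : ℤ) * i + k := by positivity
    rw [genFib, if_neg (not_lt.mpr (by linarith)),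
      show ((n : ℤ) * i + k + 1).toNat = n * i + k + 1 from by
        rw [show ((n : ℤ) * i + k + 1) = ((n * i + k + 1 : ℕ) : ℤ) from by push_cast; ring,
          Int.toNat_natCast]]
    have hterm : ∀ j ∈ Finset.range (n + 1),
        (r : ℤ) ^ (n - j) * s * genFib i k r s ((j : ℤ) * i)
          = (r : ℤ) ^ (n - j) * s * genFibAux i k r s (j * i + 1) := by
      intro j hj
      have h1 : (0 : ℤ) ≤ (j : ℤ) * i := by positivity
      rw [genFib, if_neg (not_lt.mpr (by linarith)),
        show ((j : ℤ) * i + 1).toNat = j * i + 1 from by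
          rw [show ((j : ℤ) * i + 1) = ((j * i + 1 : ℕ) : ℤ) from by push_cast; ring,
            Int.toNat_natCast]]
    rw [Finset.sum_congr rfl hterm]
    exact genFib_claim_two i k r s h2 hk n
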